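/- In ℤ[x,y,z], with b, c, d₃ as above and d₃' = y⁸z^{2m−2} − 4x^m y⁵z^{3m−2} + x^{4m−1}y⁴z^{m−1} + 6x^{2m}y²z^{4m−2} − 4x^{5m−1}yz^{2m−1} + x^{8m−2} − xz^{7m−3}, the identity x d₃ + y b c² + z d₃' = 0 holds for every integer m ≥ 1. -/
import Mathlib


open MvPolynomial

noncomputable def px : MvPolynomial (Fin 3) ℤ := X 0
noncomputable def py : MvPolynomial (Fin 3) ℤ := X 1
noncomputable def pz : MvPolynomial (Fin 3) ℤ := X 2

noncomputable def pb (m : ℕ) : MvPolynomial (Fin 3) ℤ :=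
  px ^ (3 * m - 1) - py * pz ^ (2 * m - 1)

noncomputable def pc (m : ℕ) : MvPolynomial (Fin 3) ℤ :=
  py ^ 3 - px ^ m * pz ^ m

noncomputable def pd3 (m : ℕ) : MvPolynomial (Fin 3) ℤ :=
  - px ^ (3 * m - 2) * py ^ 7 + 2 * px ^ (m - 1) * py ^ 5 * pz ^ (3 * m - 1)
    + px ^ (4 * m - 2) * py ^ 4 * pz ^ m - 5 * px ^ (2 * m - 1) * py ^ 2 * pz ^ (4 * m - 1)
    + 3 * px ^ (5 * m - 2) * py * pz ^ (2 * m) - px ^ (8 * m - 3) * pz + pz ^ (7 * m - 2)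

noncomputable def pd3' (m : ℕ) : MvPolynomial (Fin 3) ℤ :=
  py ^ 8 * pz ^ (2 * m - 2) - 4 * px ^ m * py ^ 5 * pz ^ (3 * m - 2)
    + px ^ (4 * m - 1) * py ^ 4 * pz ^ (m - 1) + 6 * px ^ (2 * m) * py ^ 2 * pz ^ (4 * m - 2)
    - 4 * px ^ (5 * m - 1) * py * pz ^ (2 * m - 1) + px ^ (8 * m - 2) - px * pz ^ (7 * m - 3)

/-- In `ℤ[x,y,z]`, `x d₃ + y b c² + z d₃' = 0` for every `m ≥ 1`. -/
theorem stmt6 (m : ℕ) (hm : 1 ≤ m) :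
    px * pd3 m + py * pb m * (pc m) ^ 2 + pz * pd3' m = 0 := by

  obtain ⟨k, rfl⟩ := Nat.exists_eq_add_of_le hm
  unfold pb pc pd3 pd3'
  have e1 : 3 * (1 + k) - 1 = 3 * k + 2 := by omega
  have e2 : 2 * (1 + k) - 1 = 2 * k + 1 := by omega
  have e3 : 3 * (1 + k) - 2 = 3 * k + 1 := by omega
  have e4 : (1 + k) - 1 = k := by omega
  have e5 : 4 * (1 + k) - 2 = 4 * k + 2 := by omega
  have e6 : 4 * (1 + k) - 1 = 4 * k + 3 := by omega
  have e7 : 5 * (1 + k) - 2 = 5 * k + 3 := by omega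
  have e8 : 5 * (1 + k) - 1 = 5 * k + 4 := by omega
  have e9 : 8 * (1 + k) - 3 = 8 * k + 5 := by omega
  have e10 : 8 * (1 + k) - 2 = 8 * k + 6 := by omega
  have e11 : 7 * (1 + k) - 2 = 7 * k + 5 := by omega
  have e12 : 7 * (1 + k) - 3 = 7 * k + 4 := by omega
  have e13 : 2 * (1 + k) - 2 = 2 * k := by omega
  have e14 : 2 * (1 + k) = 2 * k + 2 := by omega
  have e15 : 1 + k = k + 1 := by omega
  rw [e1, e2, e3, e4, e5, e6, e7, e8, e9, e10, e11, e12, e13, e14, e15]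
  ring
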